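/- arXiv:1207.0416 — 2 statements merged into one kernel-verified Lean document; each statement's English description precedes it below -/
import Mathlib

section
/- There exists a constant C > 0 such that for all real t with 0 < t ≤ 1, the series Σ_{n=0}^∞ e^{−t √n} converges and |Σ_{n=0}^∞ e^{−t √n} − 2/t²| ≤ C/t. -/
open MeasureTheory Set Real

lemma sqrt_face_antitone (t : ℝ) (ht : 0 < t) :
    Antitone (fun x : ℝ => Real.exp (-t * Real.sqrt x)) := by
  intro x y hxy
  have h := Real.sqrt_le_sqrt hxy
  exact Real.exp_le_exp.2 (by nlinarith)

lemma sqrt_face_integrable (t : ℝ) (ht : 0 < t) :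
    IntegrableOn (fun x : ℝ => Real.exp (-t * Real.sqrt x)) (Ioi 0) := by
  rw [← integrableOn_Ioi_comp_rpow_iff (fun x : ℝ => Real.exp (-t * Real.sqrt x))
    (two_ne_zero (α := ℝ))]
  have h0 : IntegrableOn (fun x : ℝ => x ^ (1 : ℝ) * Real.exp (-t * x ^ (1 : ℝ))) (Ioi 0) :=
    integrableOn_rpow_mul_exp_neg_mul_rpow (by norm_num) one_pos ht
  refine MeasureTheory.IntegrableOn.congr_fun (h0.const_mul 2) (fun x hx => ?_) measurableSet_Ioi
  have hx0 : (0 : ℝ) < x := hx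
  have h1 : x ^ (2 : ℝ) = x ^ 2 := by
    rw [show (2:ℝ) = ((2:ℕ):ℝ) by norm_num, Real.rpow_natCast]
  have h2 : Real.sqrt (x ^ (2 : ℝ)) = x := by
    rw [h1, Real.sqrt_sq hx0.le]
  simp only [smul_eq_mul, h2, Real.rpow_one]
  rw [show ((2:ℝ) - 1) = 1 by norm_num, Real.rpow_one]
  ring_nf

lemma sqrt_face_integral (t : ℝ) (ht : 0 < t) :
    ∫ x in Ioi (0:ℝ), Real.exp (-t * Real.sqrt x) = 2 / t ^ 2 := by
  have h1 : ∀ x ∈ Ioi (0:ℝ), Real.exp (-t * Real.sqrt x) = Real.exp (-t * x ^ (1/2 : ℝ)) := by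
    intro x _
    rw [Real.sqrt_eq_rpow]
  rw [setIntegral_congr_fun measurableSet_Ioi h1, integral_exp_neg_mul_rpow (by norm_num) ht]
  rw [show (1 / (1/2 : ℝ) + 1) = ((2:ℕ):ℝ) + 1 by norm_num, Real.Gamma_nat_eq_factorial]
  rw [show (-1 / (1/2 : ℝ)) = ((-2 : ℤ) : ℝ) by norm_num, Real.rpow_intCast]
  rw [zpow_neg, zpow_two]
  norm_num [Nat.factorial]
  field_simp

/-- There is a constant C > 0 such that for 0 < t ≤ 1, Σ_{n≥0} e^{−t√n} converges
    and |Σ_{n≥0} e^{−t√n} − 2/t²| ≤ C/t. -/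
theorem sqrt_face_amplitude :
    ∃ C : ℝ, 0 < C ∧ ∀ t : ℝ, 0 < t → t ≤ 1 →
      Summable (fun n : ℕ => Real.exp (-t * Real.sqrt n)) ∧
        |(∑' n : ℕ, Real.exp (-t * Real.sqrt n)) - 2 / t ^ 2| ≤ C / t := by
  refine ⟨1, one_pos, fun t ht ht1 => ?_⟩
  set f : ℝ → ℝ := fun x => Real.exp (-t * Real.sqrt x) with hfdef
  have hanti : Antitone f := sqrt_face_antitone t ht
  have hint : IntegrableOn f (Ioi 0) := sqrt_face_integrable t ht
  have hI : ∫ x in Ioi (0:ℝ), f x = 2 / t ^ 2 := sqrt_face_integral t ht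
  have hnonneg : ∀ x : ℝ, 0 ≤ f x := fun x => (Real.exp_pos _).le
  have hf0 : f 0 = 1 := by simp [hfdef]
  -- interval integral bounded by full integral
  have hile : ∀ N : ℕ, ∫ x in (0:ℝ)..(N:ℝ), f x ≤ 2 / t ^ 2 := by
    intro N
    rw [intervalIntegral.integral_of_le (by positivity), ← hI]
    refine setIntegral_mono_set hint ?_ ?_
    · exact Filter.Eventually.of_forall hnonneg
    · exact Filter.Eventually.of_forall (fun x hx => hx.1)
  -- upper bound on partial sums
  have hupper : ∀ N : ℕ, ∑ i ∈ Finset.range N, f i ≤ 1 + 2 / t ^ 2 := by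
    intro N
    cases N with
    | zero => simp; positivity
    | succ m =>
      rw [Finset.sum_range_succ']
      have h1 : ∑ i ∈ Finset.range m, f ((i : ℕ) + 1 : ℕ) ≤ ∫ x in (0:ℝ)..(m:ℝ), f x := by
        have := (hanti.antitoneOn (Icc 0 (0 + (m:ℕ)))).sum_le_integral
        simpa using this
      have h2 := hile m
      simp only [Nat.cast_zero, hf0]
      push_cast at h1 ⊢
      linarith
  have hsum : Summable (fun n : ℕ => f n) :=
    summable_of_sum_range_le (fun n => hnonneg _) hupper
  refine ⟨hsum, ?_⟩
  have htsum_le : ∑' n : ℕ, f n ≤ 1 + 2 / t ^ 2 :=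
    Real.tsum_le_of_sum_range_le (fun n => hnonneg _) hupper
  -- lower bound: integral ≤ tsum
  have hge : 2 / t ^ 2 ≤ ∑' n : ℕ, f n := by
    rw [← hI]
    have htend : Filter.Tendsto (fun N : ℕ => ∫ x in (0:ℝ)..(N:ℝ), f x) Filter.atTop
        (nhds (∫ x in Ioi (0:ℝ), f x)) :=
      (intervalIntegral_tendsto_integral_Ioi 0 hint Filter.tendsto_id).comp
        tendsto_natCast_atTop_atTop
    refine le_of_tendsto htend (Filter.Eventually.of_forall (fun N => ?_))
    have h1 : ∫ x in (0:ℝ)..(N:ℝ), f x ≤ ∑ i ∈ Finset.range N, f i := by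
      have := (hanti.antitoneOn (Icc 0 (0 + (N:ℕ)))).integral_le_sum
      simpa using this
    exact h1.trans (Summable.sum_le_tsum (Finset.range N) (fun i _ => hnonneg _) hsum)
  have h1t : (1:ℝ) ≤ 1 / t := by
    rw [le_div_iff₀ ht]; linarith
  rw [abs_le]
  constructor <;> [linarith; linarith]
end

section
/- The limit as t → 0⁺ of t · Σ_{(q₁,q₂) ∈ ℕ×ℕ} e^{−t(q₁² + q₂²)} exists and equals π/4. -/
open Filter Real MeasureTheory Set

lemma gpfa_summable {t : ℝ} (ht : 0 < t) : Summable (fun n : ℕ => Real.exp (-t * (n:ℝ)^2)) := by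
  apply Summable.of_nonneg_of_le (fun n => (Real.exp_pos _).le) (fun n => ?_)
    (summable_geometric_of_lt_one (Real.exp_pos (-t)).le (Real.exp_lt_one_iff.2 (by linarith)))
  rw [← Real.exp_nat_mul]
  apply Real.exp_le_exp.2
  have h : (n:ℝ) ≤ (n:ℝ)^2 := by exact_mod_cast Nat.le_self_pow (by norm_num) n
  nlinarith

lemma gpfa_anti {t : ℝ} (ht : 0 < t) (N : ℕ) :
    AntitoneOn (fun x : ℝ => Real.exp (-t * x^2)) (Icc (0:ℝ) (0 + N)) := by
  intro x hx y hy hxy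
  apply Real.exp_le_exp.2
  nlinarith [hx.1, mul_le_mul hxy hxy hx.1 (hx.1.trans hxy), sq_nonneg x, sq_nonneg y]

lemma gpfa_int {t : ℝ} (ht : 0 < t) :
    IntegrableOn (fun x : ℝ => Real.exp (-t * x^2)) (Ioi 0) :=
  (integrable_exp_neg_mul_sq ht).integrableOn

lemma gpfa_lower {t : ℝ} (ht : 0 < t) :
    Real.sqrt (π / t) / 2 ≤ ∑' n : ℕ, Real.exp (-t * (n:ℝ)^2) := by
  rw [← integral_gaussian_Ioi t]
  have key : ∀ N : ℕ, (∫ x in (0:ℝ)..(0 + N : ℕ), Real.exp (-t * x^2)) ≤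
      ∑' n : ℕ, Real.exp (-t * (n:ℝ)^2) := by
    intro N
    calc (∫ x in (0:ℝ)..(0 + N : ℕ), Real.exp (-t * x^2))
        ≤ ∑ i ∈ Finset.range N, Real.exp (-t * ((0:ℝ) + i)^2) := by
          simpa using (gpfa_anti ht N).integral_le_sum
      _ ≤ ∑' n : ℕ, Real.exp (-t * (n:ℝ)^2) := by
          simp only [zero_add]
          exact Summable.sum_le_tsum _ (fun i _ => (Real.exp_pos _).le) (gpfa_summable ht)
  have tend : Tendsto (fun N : ℕ => ∫ x in (0:ℝ)..(N:ℝ), Real.exp (-t * x^2)) atTop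
      (nhds (∫ x in Ioi (0:ℝ), Real.exp (-t * x^2))) :=
    intervalIntegral_tendsto_integral_Ioi 0 (gpfa_int ht) tendsto_natCast_atTop_atTop
  exact le_of_tendsto tend (Filter.Eventually.of_forall (fun N => by simpa using key N))

lemma gpfa_upper {t : ℝ} (ht : 0 < t) :
    ∑' n : ℕ, Real.exp (-t * (n:ℝ)^2) ≤ Real.sqrt (π / t) / 2 + 1 := by
  rw [Summable.tsum_eq_zero_add (gpfa_summable ht)]
  have h0 : Real.exp (-t * (0:ℕ)^2) = 1 := by norm_num
  rw [h0, add_comm, add_le_add_iff_right]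
  rw [← integral_gaussian_Ioi t]
  apply Real.tsum_le_of_sum_range_le (fun n => (Real.exp_pos _).le)
  intro N
  push_cast
  calc ∑ i ∈ Finset.range N, Real.exp (-t * ((i:ℝ)+1)^2)
      ≤ ∫ x in (0:ℝ)..(0 + N : ℕ), Real.exp (-t * x^2) := by
        have := (gpfa_anti ht N).sum_le_integral
        simpa using this
    _ ≤ ∫ x in Ioi (0:ℝ), Real.exp (-t * x^2) := by
        rw [intervalIntegral.integral_of_le (by positivity)]
        apply setIntegral_mono_set (gpfa_int ht)
          (Filter.Eventually.of_forall fun x => (Real.exp_pos _).le)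
        exact (Ioc_subset_Ioi_self).eventuallyLE

lemma gpfa_prod {t : ℝ} (ht : 0 < t) :
    ∑' q : ℕ × ℕ, Real.exp (-t * ((q.1 : ℝ) ^ 2 + (q.2 : ℝ) ^ 2)) =
      (∑' n : ℕ, Real.exp (-t * (n:ℝ)^2)) * (∑' n : ℕ, Real.exp (-t * (n:ℝ)^2)) := by
  have heq : ∀ q : ℕ × ℕ, Real.exp (-t * ((q.1 : ℝ) ^ 2 + (q.2 : ℝ) ^ 2)) =
      Real.exp (-t * (q.1:ℝ)^2) * Real.exp (-t * (q.2:ℝ)^2) := by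
    intro q; rw [← Real.exp_add]; ring_nf
  have hs : Summable (fun q : ℕ × ℕ => Real.exp (-t * (q.1:ℝ)^2) * Real.exp (-t * (q.2:ℝ)^2)) :=
    (gpfa_summable ht).mul_of_nonneg (gpfa_summable ht)
      (fun n => (Real.exp_pos _).le) (fun n => (Real.exp_pos _).le)
  simp_rw [heq]
  exact ((gpfa_summable ht).hasSum.mul (gpfa_summable ht).hasSum hs).tsum_eq

lemma gpfa_sqrt_mul {t : ℝ} (ht : 0 < t) : t * Real.sqrt (π / t) = Real.sqrt (π * t) := by
  rw [show π * t = (π / t) * t^2 by field_simp, Real.sqrt_mul (by positivity),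
    Real.sqrt_sq ht.le]
  ring

lemma gpfa_sqrt_sq {t : ℝ} (ht : 0 < t) : t * Real.sqrt (π / t) ^ 2 = π := by
  rw [Real.sq_sqrt (by positivity)]; field_simp

/-- t · Σ_{(q₁,q₂)∈ℕ²} e^{−t(q₁²+q₂²)} tends to π/4 as t → 0⁺. -/
theorem gaussian_pair_face_amplitude :
    Tendsto
      (fun t : ℝ => t * ∑' q : ℕ × ℕ, Real.exp (-t * ((q.1 : ℝ) ^ 2 + (q.2 : ℝ) ^ 2)))
      (nhdsWithin 0 (Set.Ioi 0)) (nhds (Real.pi / 4)) := by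
  have hupper : Tendsto (fun t : ℝ => π / 4 + Real.sqrt (π * t) + t)
      (nhdsWithin 0 (Set.Ioi 0)) (nhds (π / 4)) := by
    have hc : Continuous (fun t : ℝ => π / 4 + Real.sqrt (π * t) + t) := by
      fun_prop
    have := hc.tendsto 0
    simp only [mul_zero, Real.sqrt_zero, add_zero] at this
    exact this.mono_left nhdsWithin_le_nhds
  refine tendsto_of_tendsto_of_tendsto_of_le_of_le' tendsto_const_nhds hupper ?_ ?_ <;>
    filter_upwards [self_mem_nhdsWithin] with t ht <;>
    · have ht : (0:ℝ) < t := ht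
      rw [gpfa_prod ht]
      set s := ∑' n : ℕ, Real.exp (-t * (n:ℝ)^2) with hsdef
      have hs1 : Real.sqrt (π / t) / 2 ≤ s := gpfa_lower ht
      have hs2 : s ≤ Real.sqrt (π / t) / 2 + 1 := gpfa_upper ht
      have hs0 : (0:ℝ) ≤ s := le_trans (by positivity) hs1
      have h1 : t * Real.sqrt (π / t) ^ 2 = π := gpfa_sqrt_sq ht
      have h2 : t * Real.sqrt (π / t) = Real.sqrt (π * t) := gpfa_sqrt_mul ht
      set u := Real.sqrt (π / t) with hudef
      have hu0 : (0:ℝ) ≤ u := Real.sqrt_nonneg _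
      nlinarith [mul_le_mul hs1 hs1 (by positivity) hs0,
        mul_le_mul hs2 hs2 hs0 (by positivity),
        mul_le_mul_of_nonneg_left (mul_le_mul hs1 hs1 (by positivity) hs0) ht.le,
        mul_le_mul_of_nonneg_left (mul_le_mul hs2 hs2 hs0 (by positivity)) ht.le]
end
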